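/- (The strong simple game 𝒞² is non-weighted.) Let N = {1,2,…,8} and let 𝒞² be the collection of subsets {{1,2,3}, {1,2,4}, {1,2,7}, {2,3,4}, {1,3,5,6}, {1,3,5,7}, {1,3,6,7}, {1,4,5,6,8}, {2,3,5}, {2,3,6}, {2,3,8}, {2,5,7}, {2,6,7}, {2,4,5,6}, {3,4,7}}. Then there exist no weights w : N → ℝ and threshold q ∈ ℝ such that 𝒞² = {C ⊆ N : Σ_{i ∈ C} w i ≥ q}; that is, the strong simple game (N, 𝒞²) is non-weighted. (This follows from the trade between C₁ = {2,3,6} and C₂ = {3,4,7}, which produces the losing coalitions {2,3,7} and {3,4,6}.) -/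
import Mathlib


/-- The M-winning coalition set 𝒞² of Section 2 (voters 1,…,8). -/
def C2 : Set (Finset ℕ) :=
  { {1,2,3}, {1,2,4}, {1,2,7}, {2,3,4}, {1,3,5,6}, {1,3,5,7}, {1,3,6,7},
    {1,4,5,6,8}, {2,3,5}, {2,3,6}, {2,3,8}, {2,5,7}, {2,6,7}, {2,4,5,6}, {3,4,7} }

/-- The strong simple game (N, 𝒞²) with N = {1,…,8} is non-weighted: there are no
weights and threshold representing 𝒞² as the family of subsets of N whose total
weight meets the threshold. -/
theorem stmt18 :
    ¬ ∃ (w : ℕ → ℝ) (q : ℝ), ∀ C : Finset ℕ, C ⊆ Finset.Icc 1 8 →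
      (C ∈ C2 ↔ q ≤ ∑ i ∈ C, w i) := by
  rintro ⟨w, q, h⟩
  have h1 := (h {2,3,6} (by decide)).mp (by simp [C2])
  have h2 := (h {3,4,7} (by decide)).mp (by simp [C2])
  have h3 := (h {2,3,7} (by decide)).not.mp (by simp [C2]; decide)
  have h4 := (h {3,4,6} (by decide)).not.mp (by simp [C2]; decide)
  push_neg at h3 h4
  simp [Finset.sum_insert, Finset.mem_insert] at h1 h2 h3 h4
  linarith
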